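/- Let N ≥ 1, M ≥ 2, K = N·M, and let P_1, …, P_N be pairwise disjoint subsets of Fin K with |P_j| = M for all j whose union is all of Fin K. Define f(w) = Σ_{j=1}^N ∏_{k ∈ P_j} w_k (operations in ZMod 2). Then for every nonempty S ⊆ Fin K, letting r = card {j ∈ [N] : S ∩ P_j ≠ ∅}, the joint influence of S on f equals (1 − (1 − 2^{2−M})^r)/2. -/

import Mathlib

open Finset

/-- Indicator vector of a finite set of coordinates: `(𝟙_S)_k = 1` iff `k ∈ S`. -/
def indVec {K : ℕ} (S : Finset (Fin K)) : Fin K → ZMod 2 :=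
  fun k => if k ∈ S then 1 else 0

/-- Joint influence of the set `S` of coordinates on the Boolean function `f`:
the normalized count of inputs `w` for which flipping exactly the coordinates in `S`
changes the value of `f`. -/
def jointInf {K : ℕ} (S : Finset (Fin K)) (f : (Fin K → ZMod 2) → ZMod 2) : ℚ :=
  ((Finset.univ.filter fun w : Fin K → ZMod 2 => f (w + indVec S) ≠ f w).card : ℚ) / 2 ^ K

def chi (a : ZMod 2) : ℤ := if a = 0 then 1 else -1

lemma chi_add (a b : ZMod 2) : chi (a + b) = chi a * chi b := by revert a b; decide

lemma chi_sum {ι : Type*} (s : Finset ι) (v : ι → ZMod 2) :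
    chi (∑ j ∈ s, v j) = ∏ j ∈ s, chi (v j) := by
  induction s using Finset.cons_induction with
  | empty => simp [chi]
  | cons a s ha ih => rw [Finset.sum_cons, Finset.prod_cons, chi_add, ih]

lemma sum_chi {α : Type*} [Fintype α] [DecidableEq α] (g : α → ZMod 2) :
    ∑ x, chi (g x) = (Fintype.card α : ℤ)
      - 2 * ((Finset.univ.filter fun x => g x = 1).card : ℤ) := by
  classical
  rw [← Finset.sum_filter_add_sum_filter_not Finset.univ (fun x => g x = 1)]
  have h1 : ∀ x ∈ Finset.univ.filter (fun x => g x = 1), chi (g x) = -1 := by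
    intro x hx; simp only [mem_filter] at hx; rw [hx.2]; rfl
  have h0 : ∀ x ∈ Finset.univ.filter (fun x => ¬ g x = 1), chi (g x) = 1 := by
    intro x hx; simp only [mem_filter] at hx
    have : g x = 0 := by
      have := hx.2; revert this; generalize g x = a; revert a; decide
    rw [this]; rfl
  rw [Finset.sum_congr rfl h1, Finset.sum_congr rfl h0]
  simp only [Finset.sum_const, nsmul_eq_mul, mul_one, mul_neg_one]
  have := Finset.card_filter_add_card_filter_not (s := (Finset.univ : Finset α))
    (p := fun x => g x = 1)
  rw [← Finset.card_univ]
  push_cast [← this]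
  ring

lemma prod_zmod2_eq_one {ι : Type*} [Fintype ι] (v : ι → ZMod 2) :
    (∏ k, v k) = 1 ↔ ∀ k, v k = 1 := by
  constructor
  · intro h k
    by_contra hk
    have h0 : v k = 0 := by revert hk; generalize v k = a; revert a; decide
    have : (∏ k, v k) = 0 := Finset.prod_eq_zero (Finset.mem_univ k) h0
    rw [this] at h; exact absurd h (by decide)
  · intro h; exact Finset.prod_eq_one (fun k _ => h k)

theorem stmt5 (N M K : ℕ) (hN : 1 ≤ N) (hM : 2 ≤ M) (hK : K = N * M)
    (P : Fin N → Finset (Fin K))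
    (hdisj : ∀ i j, i ≠ j → Disjoint (P i) (P j))
    (hcard : ∀ j, (P j).card = M)
    (hcover : (Finset.univ : Finset (Fin N)).biUnion P = Finset.univ)
    (f : (Fin K → ZMod 2) → ZMod 2)
    (hf : ∀ w, f w = ∑ j : Fin N, ∏ k ∈ P j, w k)
    (S : Finset (Fin K)) (hS : S.Nonempty) :
    jointInf S f =
      (1 - (1 - (2 : ℚ) ^ ((2 : ℤ) - (M : ℤ)))
        ^ (Finset.univ.filter fun j : Fin N => (S ∩ P j).Nonempty).card) / 2 := by
  classical
  have hex : ∀ k : Fin K, ∃ j, k ∈ P j := by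
    intro k
    have hk : k ∈ (Finset.univ : Finset (Fin N)).biUnion P := by
      rw [hcover]; exact Finset.mem_univ k
    obtain ⟨j, _, hj⟩ := Finset.mem_biUnion.mp hk
    exact ⟨j, hj⟩
  choose blk hblk using hex
  have huniq : ∀ k j, k ∈ P j → blk k = j := by
    intro k j hk
    by_contra h
    exact (Finset.disjoint_left.mp (hdisj _ _ h) (hblk k)) hk
  have hmem : ∀ (j : Fin N) (k : Fin K), k ∈ P j ↔ blk k = j :=
    fun j k => ⟨huniq k j, fun h => h ▸ hblk k⟩
  set s : Fin K → ZMod 2 := indVec S with hs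
  set D : Fin N → (Fin K → ZMod 2) → ZMod 2 :=
    fun j w => (∏ k ∈ P j, (w k + s k)) + ∏ k ∈ P j, w k with hD
  have hg : ∀ w, (f (w + s) ≠ f w) ↔ (∑ j, D j w) = 1 := by
    intro w
    rw [hf, hf]
    have h1 : (∑ j, D j w)
        = (∑ j : Fin N, ∏ k ∈ P j, (w + s) k) + ∑ j : Fin N, ∏ k ∈ P j, w k := by
      rw [← Finset.sum_add_distrib]
      rfl
    rw [h1]
    generalize (∑ j : Fin N, ∏ k ∈ P j, (w + s) k) = a
    generalize (∑ j : Fin N, ∏ k ∈ P j, w k) = b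
    revert a b; decide
  let e : (Fin K → ZMod 2) ≃ ∀ j : Fin N, {k // blk k = j} → ZMod 2 :=
  { toFun := fun w j k => w k.1
    invFun := fun x k => x (blk k) ⟨k, rfl⟩
    left_inv := fun w => rfl
    right_inv := fun x => by
      funext j k
      obtain ⟨k, hk⟩ := k
      subst hk
      rfl }
  let G : ∀ j : Fin N, ({k // blk k = j} → ZMod 2) → ℤ :=
    fun j y => chi ((∏ k : {k // blk k = j}, (y k + s k.1))
      + ∏ k : {k // blk k = j}, y k)
  have he : ∀ (x) (j : Fin N) (k : {k // blk k = j}), e.symm x k.1 = x j k := by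
    rintro x j ⟨k, rfl⟩; rfl
  have hkey : ∀ (x) (j : Fin N), chi (D j (e.symm x)) = G j (x j) := by
    intro x j
    have hp1 : (∏ k ∈ P j, (e.symm x k + s k))
        = ∏ k : {k // blk k = j}, (x j k + s k.1) := by
      rw [Finset.prod_subtype (p := fun k => blk k = j) _ (hmem j)]
      exact Finset.prod_congr rfl (fun k _ => by rw [he x j k])
    have hp2 : (∏ k ∈ P j, e.symm x k) = ∏ k : {k // blk k = j}, x j k := by
      rw [Finset.prod_subtype (p := fun k => blk k = j) _ (hmem j)]
      exact Finset.prod_congr rfl (fun k _ => by rw [he x j k])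
    simp only [hD, G, hp1, hp2]
  have hsum : (∑ w : Fin K → ZMod 2, chi (∑ j, D j w))
      = ∏ j : Fin N, ∑ y : {k // blk k = j} → ZMod 2, G j y := by
    rw [← Equiv.sum_comp e.symm (fun w => chi (∑ j, D j w))]
    have h2 : ∀ x, chi (∑ j, D j (e.symm x)) = ∏ j, G j (x j) := by
      intro x
      rw [chi_sum]
      exact Finset.prod_congr rfl (fun j _ => hkey x j)
    rw [Finset.sum_congr rfl (fun x _ => h2 x)]
    rw [Finset.prod_univ_sum]
    rw [Fintype.piFinset_univ]
  have fibcard : ∀ j : Fin N, Fintype.card {k // blk k = j} = M := by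
    intro j
    rw [Fintype.card_subtype]
    rw [show Finset.univ.filter (fun k => blk k = j) = P j by
      ext k; simp [hmem j k]]
    exact hcard j
  have hblock : ∀ j : Fin N,
      (∑ y : {k // blk k = j} → ZMod 2, G j y)
        = if (S ∩ P j).Nonempty then (2 : ℤ) ^ M - 4 else 2 ^ M := by
    intro j
    by_cases hj : (S ∩ P j).Nonempty
    · rw [if_pos hj]
      obtain ⟨k0, hk0⟩ := hj
      rw [Finset.mem_inter] at hk0
      set y1 : {k // blk k = j} → ZMod 2 := fun k => 1 + s k.1 with hy1
      set y2 : {k // blk k = j} → ZMod 2 := fun _ => 1 with hy2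
      have hk0b : blk k0 = j := huniq k0 j hk0.2
      have hsk0 : s k0 = 1 := by simp [hs, indVec, hk0.1]
      have hne : y1 ≠ y2 := by
        intro h
        have h2 := congrFun h ⟨k0, hk0b⟩
        simp only [hy1, hy2, hsk0] at h2
        exact absurd h2 (by decide)
      have hA : ∀ y : {k // blk k = j} → ZMod 2,
          (∏ k : {k // blk k = j}, (y k + s k.1)) = 1 ↔ y = y1 := by
        intro y
        rw [prod_zmod2_eq_one]
        constructor
        · intro h; funext k
          have h2 : ∀ a b : ZMod 2, a + b = 1 → a = 1 + b := by decide
          exact h2 _ _ (h k)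
        · intro h; subst h; intro k
          show (1 + s k.1) + s k.1 = 1
          generalize s k.1 = b; revert b; decide
      have hB : ∀ y : {k // blk k = j} → ZMod 2,
          (∏ k : {k // blk k = j}, y k) = 1 ↔ y = y2 := by
        intro y
        rw [prod_zmod2_eq_one]
        constructor
        · intro h; funext k; exact h k
        · intro h; subst h; intro k; rfl
      have hzm : ∀ a : ZMod 2, a ≠ 1 → a = 0 := by decide
      have hfilter : (Finset.univ.filter fun y : {k // blk k = j} → ZMod 2 =>
          ((∏ k : {k // blk k = j}, (y k + s k.1)) + ∏ k : {k // blk k = j}, y k) = 1)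
          = {y1, y2} := by
        ext y
        simp only [Finset.mem_filter, Finset.mem_univ, true_and, Finset.mem_insert,
          Finset.mem_singleton]
        constructor
        · intro h
          have hor : (∏ k : {k // blk k = j}, (y k + s k.1)) = 1
              ∨ (∏ k : {k // blk k = j}, y k) = 1 := by
            revert h
            generalize (∏ k : {k // blk k = j}, (y k + s k.1)) = a
            generalize (∏ k : {k // blk k = j}, y k) = b
            revert a b; decide
          rcases hor with h1 | h1
          · exact Or.inl ((hA y).mp h1)
          · exact Or.inr ((hB y).mp h1)
        · rintro (rfl | rfl)
          · rw [(hA y1).mpr rfl]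
            have hb0 : (∏ k : {k // blk k = j}, y1 k) = 0 :=
              hzm _ (fun h => hne ((hB y1).mp h))
            rw [hb0]; rfl
          · rw [(hB y2).mpr rfl]
            have ha0 : (∏ k : {k // blk k = j}, (y2 k + s k.1)) = 0 :=
              hzm _ (fun h => hne ((hA y2).mp h).symm)
            rw [ha0]; rfl
      have := sum_chi (fun y : {k // blk k = j} → ZMod 2 =>
        (∏ k : {k // blk k = j}, (y k + s k.1)) + ∏ k : {k // blk k = j}, y k)
      rw [hfilter, Finset.card_pair hne, Fintype.card_fun, fibcard j] at this
      show (∑ y : {k // blk k = j} → ZMod 2, chi ((∏ k : {k // blk k = j}, (y k + s k.1))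
        + ∏ k : {k // blk k = j}, y k)) = 2 ^ M - 4
      rw [this]
      have : Fintype.card (ZMod 2) = 2 := rfl
      rw [this]
      push_cast
      ring
    · rw [if_neg hj]
      have hs0 : ∀ k : {k // blk k = j}, s k.1 = 0 := by
        intro k
        have hkP : k.1 ∈ P j := (hmem j k.1).mpr k.2
        have hkS : k.1 ∉ S := fun h => hj ⟨k.1, Finset.mem_inter.mpr ⟨h, hkP⟩⟩
        simp [hs, indVec, hkS]
      have hone : ∀ y : {k // blk k = j} → ZMod 2, G j y = 1 := by
        intro y
        simp only [G]
        have h3 : (∏ k : {k // blk k = j}, (y k + s k.1)) = ∏ k : {k // blk k = j}, y k :=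
          Finset.prod_congr rfl (fun k _ => by rw [hs0 k, add_zero])
        rw [h3]
        have h2 : ∀ a : ZMod 2, a + a = 0 := by decide
        rw [h2, show chi 0 = 1 from rfl]
      rw [Finset.sum_congr rfl (fun y _ => hone y)]
      rw [Finset.sum_const, Finset.card_univ, Fintype.card_fun, fibcard j]
      have : Fintype.card (ZMod 2) = 2 := rfl
      rw [this]
      push_cast
      ring
  set R := Finset.univ.filter (fun j : Fin N => (S ∩ P j).Nonempty) with hR
  set r := R.card with hr
  have hrN : r ≤ N := by
    rw [hr]
    calc R.card ≤ (Finset.univ : Finset (Fin N)).card := Finset.card_le_card (Finset.filter_subset _ _)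
    _ = N := by simp
  have hprod : (∏ j : Fin N, ∑ y : {k // blk k = j} → ZMod 2, G j y)
      = ((2:ℤ)^M - 4)^r * ((2:ℤ)^M)^(N - r) := by
    rw [Finset.prod_congr rfl (fun j _ => hblock j)]
    rw [Finset.prod_ite, Finset.prod_const, Finset.prod_const]
    congr 1
    have h5 := Finset.card_filter_add_card_filter_not
      (s := (Finset.univ : Finset (Fin N))) (p := fun j => (S ∩ P j).Nonempty)
    rw [Finset.card_univ, Fintype.card_fin] at h5
    have hrc : r = (Finset.univ.filter (fun j : Fin N => (S ∩ P j).Nonempty)).card := by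
      rw [hr, hR]
    have : (Finset.univ.filter (fun j : Fin N => ¬ (S ∩ P j).Nonempty)).card = N - r := by
      omega
    rw [this]
  have hcount : (2:ℤ) * (((Finset.univ.filter
        fun w : Fin K → ZMod 2 => f (w + s) ≠ f w).card : ℤ))
      = 2^K - ((2:ℤ)^M - 4)^r * ((2:ℤ)^M)^(N-r) := by
    have h1 := sum_chi (fun w : Fin K → ZMod 2 => ∑ j, D j w)
    rw [hsum, hprod] at h1
    have hfeq : (Finset.univ.filter fun w : Fin K → ZMod 2 => f (w + s) ≠ f w)
        = (Finset.univ.filter fun w : Fin K → ZMod 2 => (∑ j, D j w) = 1) := by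
      ext w
      simp only [Finset.mem_filter, Finset.mem_univ, true_and]
      exact hg w
    have hcardfun : (Fintype.card (Fin K → ZMod 2) : ℤ) = 2^K := by
      rw [Fintype.card_fun, Fintype.card_fin, show Fintype.card (ZMod 2) = 2 from rfl]
      push_cast; ring
    rw [hcardfun] at h1
    rw [hfeq]
    linarith
  unfold jointInf
  rw [← hs]
  have hc : (((Finset.univ.filter
        fun w : Fin K → ZMod 2 => f (w + s) ≠ f w).card : ℚ))
      = (2^K - ((2:ℚ)^M - 4)^r * ((2:ℚ)^M)^(N-r)) / 2 := by
    have h6 : (2:ℚ) * (((Finset.univ.filter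
        fun w : Fin K → ZMod 2 => f (w + s) ≠ f w).card : ℚ))
      = 2^K - ((2:ℚ)^M - 4)^r * ((2:ℚ)^M)^(N-r) := by exact_mod_cast hcount
    linarith
  rw [hc]
  have hM2 : (2:ℚ) ^ ((2:ℤ) - (M:ℤ)) = 4 / 2^M := by
    rw [zpow_sub₀ (by norm_num : (2:ℚ) ≠ 0)]
    norm_num [zpow_natCast]
  rw [hM2]
  have h2K : (2:ℚ)^K = ((2:ℚ)^M)^r * ((2:ℚ)^M)^(N-r) := by
    rw [← pow_add, Nat.add_sub_cancel' hrN, ← pow_mul, hK, Nat.mul_comm]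
  rw [h2K]
  have h4 : (1 : ℚ) - 4 / 2^M = (2^M - 4)/2^M := by
    field_simp
  rw [h4, div_pow]
  have hp1 : ((2:ℚ)^M)^r ≠ 0 := by positivity
  have hp2 : ((2:ℚ)^M)^(N-r) ≠ 0 := by positivity
  field_simp
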